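/- Let C be a coassociative counital coalgebra over a field k. The cokernel of an injective morphism from a finitely copresented left C-comodule to a finitely cogenerated left C-comodule is finitely cogenerated. -/

import Mathlib

open TensorProduct LinearMap

section Core

variable (k : Type) [Field k]
variable (C : Type) [AddCommGroup C] [Module k C] [Coalgebra k C]

/-- Axioms for a left `C`-comodule structure given by a coaction map `ρ`. -/
structure IsComod {M : Type} [AddCommGroup M] [Module k M]
    (ρ : M →ₗ[k] C ⊗[k] M) : Prop where
  coassoc : ∀ m : M, (TensorProduct.assoc k C C M)
      ((CoalgebraStruct.comul (R := k) (A := C)).rTensor M (ρ m)) = ρ.lTensor C (ρ m)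
  counit : ∀ m : M, (TensorProduct.lid k M)
      ((CoalgebraStruct.counit (R := k) (A := C)).rTensor M (ρ m)) = m

/-- A `k`-linear map between comodules is a comodule morphism. -/
def IsComodHom {M N : Type} [AddCommGroup M] [Module k M] [AddCommGroup N] [Module k N]
    (ρM : M →ₗ[k] C ⊗[k] M) (ρN : N →ₗ[k] C ⊗[k] N) (f : M →ₗ[k] N) : Prop :=
  f.lTensor C ∘ₗ ρM = ρN ∘ₗ f

/-- The coaction of the cofree left comodule `C ⊗ V`. -/
noncomputable def cofreeCoaction (V : Type) [AddCommGroup V] [Module k V] :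
    C ⊗[k] V →ₗ[k] C ⊗[k] (C ⊗[k] V) :=
  (TensorProduct.assoc k C C V).toLinearMap ∘ₗ
    (CoalgebraStruct.comul (R := k) (A := C)).rTensor V

/-- A left comodule is finitely cogenerated if it admits an injective comodule
morphism into a cofree comodule with finite-dimensional space of cogenerators. -/
def FinCogen {M : Type} [AddCommGroup M] [Module k M]
    (ρ : M →ₗ[k] C ⊗[k] M) : Prop :=
  ∃ (V : Type) (_ : AddCommGroup V) (_ : Module k V), FiniteDimensional k V ∧
    ∃ f : M →ₗ[k] C ⊗[k] V, Function.Injective f ∧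
      IsComodHom k C ρ (cofreeCoaction k C V) f

end Core

section SubQuot

variable (k : Type) [Field k]
variable (C : Type) [AddCommGroup C] [Module k C] [Coalgebra k C]
variable {M : Type} [AddCommGroup M] [Module k M]

/-- A subspace `N ⊆ M` is a subcomodule if the coaction takes it into the image of
`C ⊗ N` in `C ⊗ M`. -/
def IsSubcomod (ρ : M →ₗ[k] C ⊗[k] M) (N : Submodule k M) : Prop :=
  ∀ m ∈ N, ρ m ∈ LinearMap.range (N.subtype.lTensor C)

/-- The quotient comodule `M/N` is finitely cogenerated; equivalently, there is a
morphism of comodules from `M` to a cofree comodule with a finite-dimensional space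
of cogenerators whose kernel is exactly `N`. -/
def QuotFinCogen (ρ : M →ₗ[k] C ⊗[k] M) (N : Submodule k M) : Prop :=
  ∃ (V : Type) (_ : AddCommGroup V) (_ : Module k V), FiniteDimensional k V ∧
    ∃ g : M →ₗ[k] C ⊗[k] V, IsComodHom k C ρ (cofreeCoaction k C V) g ∧
      LinearMap.ker g = N

/-- A comodule is co-Noetherian if all its quotient comodules are finitely
cogenerated. -/
def CoNoetherianComod (ρ : M →ₗ[k] C ⊗[k] M) : Prop :=
  ∀ N : Submodule k M, IsSubcomod k C ρ N → QuotFinCogen k C ρ N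

/-- A comodule is Artinian if every descending chain of its subcomodules
terminates. -/
def ArtinianComod (ρ : M →ₗ[k] C ⊗[k] M) : Prop :=
  ∀ f : ℕ → Submodule k M, (∀ n, IsSubcomod k C ρ (f n)) →
    (∀ n, f (n + 1) ≤ f n) → ∃ n, ∀ m, n ≤ m → f m = f n

end SubQuot

section FinCopres

variable (k : Type) [Field k]
variable (C : Type) [AddCommGroup C] [Module k C] [Coalgebra k C]
variable {M : Type} [AddCommGroup M] [Module k M]

/-- A left comodule is finitely copresented if it is (isomorphic to) the kernel of a
morphism of finitely cogenerated cofree comodules. -/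
def FinCopres (ρ : M →ₗ[k] C ⊗[k] M) : Prop :=
  ∃ (V : Type) (_ : AddCommGroup V) (_ : Module k V)
    (W : Type) (_ : AddCommGroup W) (_ : Module k W),
    FiniteDimensional k V ∧ FiniteDimensional k W ∧
    ∃ g : C ⊗[k] V →ₗ[k] C ⊗[k] W,
      IsComodHom k C (cofreeCoaction k C V) (cofreeCoaction k C W) g ∧
      ∃ e : M →ₗ[k] C ⊗[k] V, Function.Injective e ∧
        IsComodHom k C ρ (cofreeCoaction k C V) e ∧
        LinearMap.range e = LinearMap.ker g

end FinCopres


section Aux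

variable (k : Type) [Field k]
variable (C : Type) [AddCommGroup C] [Module k C] [Coalgebra k C]

open CoalgebraStruct

/-- Naturality of the associator with respect to a map on the last factor. -/
lemma helper_nat {X Y : Type} [AddCommGroup X] [Module k X] [AddCommGroup Y] [Module k Y]
    (γ : X →ₗ[k] Y) (y : C ⊗[k] X) :
    (γ.lTensor C).lTensor C ((TensorProduct.assoc k C C X)
        ((comul (R := k) (A := C)).rTensor X y)) =
      (TensorProduct.assoc k C C Y) ((comul (R := k) (A := C)).rTensor Y (γ.lTensor C y)) := by
  induction y using TensorProduct.induction_on with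
  | zero => simp
  | tmul c x =>
    simp only [rTensor_tmul, lTensor_tmul]
    generalize comul (R := k) (A := C) c = z
    induction z using TensorProduct.induction_on with
    | zero => simp
    | tmul a b => simp
    | add u w hu hw => simp only [add_tmul, map_add, hu, hw]
  | add u w hu hw => simp only [map_add, hu, hw]

/-- A linear map into a cofree comodule built from the coaction is a comodule morphism. -/
lemma mk_isComodHom {M X : Type} [AddCommGroup M] [Module k M] [AddCommGroup X] [Module k X]
    (ρ : M →ₗ[k] C ⊗[k] M)
    (hco : ∀ m : M, (TensorProduct.assoc k C C M)
        ((comul (R := k) (A := C)).rTensor M (ρ m)) = ρ.lTensor C (ρ m))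
    (γ : M →ₗ[k] X) :
    IsComodHom k C ρ (cofreeCoaction k C X) (γ.lTensor C ∘ₗ ρ) := by
  unfold IsComodHom cofreeCoaction
  ext m
  simp only [coe_comp, Function.comp_apply, LinearEquiv.coe_coe, lTensor_comp]
  rw [← hco m]
  exact helper_nat k C γ (ρ m)

/-- lTensor of a map is a morphism of cofree comodules. -/
lemma lTensor_isComodHom {X Y : Type} [AddCommGroup X] [Module k X] [AddCommGroup Y] [Module k Y]
    (ψ : X →ₗ[k] Y) :
    IsComodHom k C (cofreeCoaction k C X) (cofreeCoaction k C Y) (ψ.lTensor C) := by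
  unfold IsComodHom cofreeCoaction
  refine LinearMap.ext fun z => ?_
  simpa using helper_nat k C ψ z

lemma counit_nat {X : Type} [AddCommGroup X] [Module k X] (y : C ⊗[k] X) :
    ((TensorProduct.lid k X).toLinearMap.lTensor C)
      (((counit (R := k) (A := C)).rTensor X).lTensor C
        ((TensorProduct.assoc k C C X) ((comul (R := k) (A := C)).rTensor X y))) = y := by
  induction y using TensorProduct.induction_on with
  | zero => simp
  | tmul c x =>
    simp only [rTensor_tmul]
    have key : ∀ z : C ⊗[k] C,
        ((TensorProduct.lid k X).toLinearMap.lTensor C)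
          (((counit (R := k) (A := C)).rTensor X).lTensor C
            ((TensorProduct.assoc k C C X) (z ⊗ₜ[k] x)))
        = (LinearMap.toSpanSingleton k X x).lTensor C
            ((counit (R := k) (A := C)).lTensor C z) := by
      intro z
      induction z using TensorProduct.induction_on with
      | zero => simp
      | tmul a b => simp [toSpanSingleton_apply]
      | add u w hu hw => simp only [add_tmul, map_add, hu, hw]
    rw [key, Coalgebra.lTensor_counit_comul]
    simp
  | add u w hu hw => simp only [map_add, hu, hw]

/-- Couniversality of the cofree comodule: a comodule morphism `α : M → C ⊗ X` is recovered
from its corestriction `lid ∘ (ε ⊗ 1) ∘ α`. -/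
lemma cofree_univ {M X : Type} [AddCommGroup M] [Module k M] [AddCommGroup X] [Module k X]
    (ρ : M →ₗ[k] C ⊗[k] M) (α : M →ₗ[k] C ⊗[k] X)
    (hα : IsComodHom k C ρ (cofreeCoaction k C X) α) (m : M) :
    (((TensorProduct.lid k X).toLinearMap ∘ₗ
        (counit (R := k) (A := C)).rTensor X ∘ₗ α).lTensor C) (ρ m) = α m := by
  have h1 : α.lTensor C (ρ m) = (TensorProduct.assoc k C C X)
      ((comul (R := k) (A := C)).rTensor X (α m)) := by
    have h := LinearMap.congr_fun hα m
    simp only [coe_comp, Function.comp_apply, cofreeCoaction, LinearEquiv.coe_coe] at h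
    exact h
  rw [lTensor_comp, lTensor_comp, comp_apply, comp_apply, h1]
  exact counit_nat k C (α m)

lemma isComodHom_comp {M₁ M₂ M₃ : Type}
    [AddCommGroup M₁] [Module k M₁] [AddCommGroup M₂] [Module k M₂]
    [AddCommGroup M₃] [Module k M₃]
    (ρ₁ : M₁ →ₗ[k] C ⊗[k] M₁) (ρ₂ : M₂ →ₗ[k] C ⊗[k] M₂) (ρ₃ : M₃ →ₗ[k] C ⊗[k] M₃)
    (f : M₁ →ₗ[k] M₂) (g : M₂ →ₗ[k] M₃)
    (hf : IsComodHom k C ρ₁ ρ₂ f) (hg : IsComodHom k C ρ₂ ρ₃ g) :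
    IsComodHom k C ρ₁ ρ₃ (g ∘ₗ f) := by
  unfold IsComodHom at *
  ext m
  have h1 := LinearMap.congr_fun hf m
  have h2 := LinearMap.congr_fun hg (f m)
  simp only [coe_comp, Function.comp_apply] at h1 h2 ⊢
  rw [lTensor_comp, comp_apply, h1, h2]

lemma isComodHom_sub {M₁ M₂ : Type}
    [AddCommGroup M₁] [Module k M₁] [AddCommGroup M₂] [Module k M₂]
    (ρ₁ : M₁ →ₗ[k] C ⊗[k] M₁) (ρ₂ : M₂ →ₗ[k] C ⊗[k] M₂)
    (f g : M₁ →ₗ[k] M₂)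
    (hf : IsComodHom k C ρ₁ ρ₂ f) (hg : IsComodHom k C ρ₁ ρ₂ g) :
    IsComodHom k C ρ₁ ρ₂ (f - g) := by
  unfold IsComodHom at *
  rw [lTensor_sub, sub_comp, comp_sub, hf, hg]

lemma isComodHom_add {M₁ M₂ : Type}
    [AddCommGroup M₁] [Module k M₁] [AddCommGroup M₂] [Module k M₂]
    (ρ₁ : M₁ →ₗ[k] C ⊗[k] M₁) (ρ₂ : M₂ →ₗ[k] C ⊗[k] M₂)
    (f g : M₁ →ₗ[k] M₂)
    (hf : IsComodHom k C ρ₁ ρ₂ f) (hg : IsComodHom k C ρ₁ ρ₂ g) :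
    IsComodHom k C ρ₁ ρ₂ (f + g) := by
  unfold IsComodHom at *
  rw [lTensor_add, add_comp, comp_add, hf, hg]

/-- The cofree comodule coaction is coassociative. -/
lemma cofree_coassoc {V : Type} [AddCommGroup V] [Module k V] (x : C ⊗[k] V) :
    (TensorProduct.assoc k C C (C ⊗[k] V))
        ((comul (R := k) (A := C)).rTensor (C ⊗[k] V) (cofreeCoaction k C V x))
      = (cofreeCoaction k C V).lTensor C (cofreeCoaction k C V x) := by
  induction x using TensorProduct.induction_on with
  | zero => simp
  | tmul c v =>
    have hx : cofreeCoaction k C V (c ⊗ₜ[k] v)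
        = (TensorProduct.assoc k C C V) ((comul (R := k) (A := C) c) ⊗ₜ[k] v) := by
      simp [cofreeCoaction]
    rw [hx]
    have keyA : ∀ z : C ⊗[k] C,
        (TensorProduct.assoc k C C (C ⊗[k] V))
            ((comul (R := k) (A := C)).rTensor (C ⊗[k] V)
              ((TensorProduct.assoc k C C V) (z ⊗ₜ[k] v)))
          = ((((TensorProduct.mk k C V).flip v).lTensor C).lTensor C)
              ((TensorProduct.assoc k C C C) ((comul (R := k) (A := C)).rTensor C z)) := by
      intro z
      induction z using TensorProduct.induction_on with
      | zero => simp
      | tmul a b =>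
        simp only [TensorProduct.assoc_tmul, rTensor_tmul]
        generalize comul (R := k) (A := C) a = u
        induction u using TensorProduct.induction_on with
        | zero => simp
        | tmul p q => simp
        | add u1 u2 h1 h2 => simp only [add_tmul, map_add, h1, h2]
      | add z1 z2 h1 h2 => simp only [add_tmul, map_add, h1, h2]
    have keyB : ∀ z : C ⊗[k] C,
        (cofreeCoaction k C V).lTensor C ((TensorProduct.assoc k C C V) (z ⊗ₜ[k] v))
          = ((((TensorProduct.mk k C V).flip v).lTensor C).lTensor C)
              ((comul (R := k) (A := C)).lTensor C z) := by
      intro z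
      induction z using TensorProduct.induction_on with
      | zero => simp
      | tmul a b =>
        simp only [TensorProduct.assoc_tmul, lTensor_tmul]
        have hb : cofreeCoaction k C V (b ⊗ₜ[k] v)
            = (TensorProduct.assoc k C C V) ((comul (R := k) (A := C) b) ⊗ₜ[k] v) := by
          simp [cofreeCoaction]
        rw [hb]
        generalize comul (R := k) (A := C) b = w
        induction w using TensorProduct.induction_on with
        | zero => simp
        | tmul p q => simp
        | add w1 w2 h1 h2 => simp only [tmul_add, add_tmul, map_add, h1, h2]
      | add z1 z2 h1 h2 => simp only [add_tmul, map_add, h1, h2]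
    rw [keyA, keyB, Coalgebra.coassoc_apply]
  | add x1 x2 h1 h2 => simp only [map_add, h1, h2]

end Aux

/-- Lemma 1.7(a): the cokernel of an injective morphism from a finitely copresented
left `C`-comodule `M` to a finitely cogenerated left `C`-comodule `N` is finitely
cogenerated; i.e. the quotient comodule `N / φ(M)` is finitely cogenerated. -/
theorem cokernel_finCopres_to_finCogen
    (k : Type) [Field k]
    (C : Type) [AddCommGroup C] [Module k C] [Coalgebra k C]
    (M : Type) [AddCommGroup M] [Module k M]
    (ρM : M →ₗ[k] C ⊗[k] M) (hM : IsComod k C ρM) (hMcp : FinCopres k C ρM)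
    (N : Type) [AddCommGroup N] [Module k N]
    (ρN : N →ₗ[k] C ⊗[k] N) (hN : IsComod k C ρN) (hNfc : FinCogen k C ρN)
    (φ : M →ₗ[k] N) (hφ : IsComodHom k C ρM ρN φ) (hinj : Function.Injective φ) :
    QuotFinCogen k C ρN (LinearMap.range φ) := by
  classical
  obtain ⟨V, _, _, W, _, _, hVfin, hWfin, g, hg, e, he_inj, he_hom, he_range⟩ := hMcp
  obtain ⟨U, _, _, hUfin, f, hf_inj, hf_hom⟩ := hNfc
  haveI := hVfin; haveI := hWfin; haveI := hUfin
  obtain ⟨l, hl⟩ := φ.exists_leftInverse_of_injective (LinearMap.ker_eq_bot.mpr hinj)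
  obtain ⟨l2, hl2⟩ := e.exists_leftInverse_of_injective (LinearMap.ker_eq_bot.mpr he_inj)
  set β : M →ₗ[k] V := (TensorProduct.lid k V).toLinearMap ∘ₗ
    (CoalgebraStruct.counit (R := k) (A := C)).rTensor V ∘ₗ e with hβ
  set δ : M →ₗ[k] U := (TensorProduct.lid k U).toLinearMap ∘ₗ
    (CoalgebraStruct.counit (R := k) (A := C)).rTensor U ∘ₗ (f ∘ₗ φ) with hδ
  set et : N →ₗ[k] C ⊗[k] V := ((β ∘ₗ l).lTensor C) ∘ₗ ρN with het
  set t : C ⊗[k] V →ₗ[k] C ⊗[k] U := ((δ ∘ₗ l2).lTensor C) ∘ₗ cofreeCoaction k C V with ht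
  have het_hom : IsComodHom k C ρN (cofreeCoaction k C V) et :=
    mk_isComodHom k C ρN hN.coassoc (β ∘ₗ l)
  have ht_hom : IsComodHom k C (cofreeCoaction k C V) (cofreeCoaction k C U) t :=
    mk_isComodHom k C (cofreeCoaction k C V) (cofree_coassoc k C) (δ ∘ₗ l2)
  have hfφ_hom : IsComodHom k C ρM (cofreeCoaction k C U) (f ∘ₗ φ) :=
    isComodHom_comp k C ρM ρN (cofreeCoaction k C U) φ f hφ hf_hom
  -- et extends e along φ
  have hetφ : ∀ m : M, et (φ m) = e m := by
    intro m
    have h1 : φ.lTensor C (ρM m) = ρN (φ m) := by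
      have := LinearMap.congr_fun hφ m
      simpa using this
    have : et (φ m) = (((β ∘ₗ l) ∘ₗ φ).lTensor C) (ρM m) := by
      rw [lTensor_comp]
      simp only [het, coe_comp, Function.comp_apply]
      rw [h1]
    rw [this, comp_assoc, hl, comp_id, hβ]
    exact cofree_univ k C ρM e he_hom m
  -- t extends f ∘ φ along e
  have hte : ∀ m : M, t (e m) = f (φ m) := by
    intro m
    have h1 : e.lTensor C (ρM m) = cofreeCoaction k C V (e m) := by
      have := LinearMap.congr_fun he_hom m
      simpa using this
    have : t (e m) = (((δ ∘ₗ l2) ∘ₗ e).lTensor C) (ρM m) := by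
      rw [lTensor_comp]
      simp only [ht, coe_comp, Function.comp_apply]
      rw [h1]
    rw [this, comp_assoc, hl2, comp_id, hδ]
    exact cofree_univ k C ρM (f ∘ₗ φ) hfφ_hom m
  -- the map h : N → C ⊗ (W × U)
  set h : N →ₗ[k] C ⊗[k] (W × U) :=
    ((LinearMap.inl k W U).lTensor C) ∘ₗ (g ∘ₗ et)
      + ((LinearMap.inr k W U).lTensor C) ∘ₗ (f - t ∘ₗ et) with hh
  have hh_hom : IsComodHom k C ρN (cofreeCoaction k C (W × U)) h := by
    refine isComodHom_add k C _ _ _ _ ?_ ?_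
    · exact isComodHom_comp k C ρN (cofreeCoaction k C W) (cofreeCoaction k C (W × U))
        (g ∘ₗ et) ((LinearMap.inl k W U).lTensor C)
        (isComodHom_comp k C ρN (cofreeCoaction k C V) (cofreeCoaction k C W) et g het_hom hg)
        (lTensor_isComodHom k C (LinearMap.inl k W U))
    · exact isComodHom_comp k C ρN (cofreeCoaction k C U) (cofreeCoaction k C (W × U))
        (f - t ∘ₗ et) ((LinearMap.inr k W U).lTensor C)
        (isComodHom_sub k C ρN (cofreeCoaction k C U) f (t ∘ₗ et) hf_hom
          (isComodHom_comp k C ρN (cofreeCoaction k C V) (cofreeCoaction k C U) et t het_hom ht_hom))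
        (lTensor_isComodHom k C (LinearMap.inr k W U))
  -- projections recover the two components of h
  have hproj1 : ∀ n : N, ((LinearMap.fst k W U).lTensor C) (h n) = g (et n) := by
    intro n
    simp only [hh, LinearMap.add_apply, coe_comp, Function.comp_apply, map_add, LinearMap.sub_apply]
    rw [← comp_apply ((LinearMap.fst k W U).lTensor C), ← lTensor_comp,
      ← comp_apply ((LinearMap.fst k W U).lTensor C) ((LinearMap.inr k W U).lTensor C),
      ← lTensor_comp, fst_comp_inl, fst_comp_inr, lTensor_id, lTensor_zero]
    simp
  have hproj2 : ∀ n : N, ((LinearMap.snd k W U).lTensor C) (h n) = f n - t (et n) := by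
    intro n
    simp only [hh, LinearMap.add_apply, coe_comp, Function.comp_apply, map_add, LinearMap.sub_apply]
    rw [← comp_apply ((LinearMap.snd k W U).lTensor C), ← lTensor_comp,
      ← comp_apply ((LinearMap.snd k W U).lTensor C) ((LinearMap.inr k W U).lTensor C),
      ← lTensor_comp, snd_comp_inl, snd_comp_inr, lTensor_id, lTensor_zero]
    simp
  refine ⟨W × U, inferInstance, inferInstance, inferInstance, h, hh_hom, ?_⟩
  ext n
  simp only [LinearMap.mem_ker, LinearMap.mem_range]
  constructor
  · intro hn
    have h1 : g (et n) = 0 := by rw [← hproj1 n, hn, map_zero]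
    have h2 : f n - t (et n) = 0 := by rw [← hproj2 n, hn, map_zero]
    have : et n ∈ LinearMap.range e := by
      rw [he_range]
      exact h1
    obtain ⟨m, hm⟩ := this
    refine ⟨m, ?_⟩
    apply hf_inj
    rw [← sub_eq_zero]
    rw [← hte m, hm, ← neg_sub, h2, neg_zero]
  · rintro ⟨m, rfl⟩
    have h0 : g (e m) = 0 := by
      have : e m ∈ LinearMap.ker g := by rw [← he_range]; exact ⟨m, rfl⟩
      exact this
    simp only [hh, LinearMap.add_apply, coe_comp, Function.comp_apply, LinearMap.sub_apply]
    rw [hetφ m, h0, hte m]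
    simp
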